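/- Let w be a weight on ℝ^{n+1}. Assume there exist 0 < α < 1 and 0 < β < 1/2^{n+p} such that w(R^− ∩ {αw > w_{R^+}}) < β w(R^+) for every parabolic rectangle R. Then there exist 0 < α' < 1 and 0 < β' < 1/2^{n+p} such that for every parabolic rectangle R and every measurable set E ⊂ R^− with |E| < α' |R^−| one has w(E) < β' w(R^+). -/

import Mathlib

open MeasureTheory Set

noncomputable section

/-- The spatial cube `Q(x,L)` with center `x` and side length `L`. -/
def parQ (n : ℕ) (x : Fin n → ℝ) (L : ℝ) : Set (Fin n → ℝ) :=
  {y | ∀ i, |y i - x i| ≤ L / 2}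

/-- Lower part `R^-(γ)` of the parabolic rectangle `R(x,t,L)`. -/
def pMinus (n : ℕ) (p γ : ℝ) (x : Fin n → ℝ) (t L : ℝ) : Set ((Fin n → ℝ) × ℝ) :=
  (parQ n x L) ×ˢ Set.Ioo (t - L ^ p) (t - γ * L ^ p)

/-- Upper part `R^+(γ)` of the parabolic rectangle `R(x,t,L)`. -/
def pPlus (n : ℕ) (p γ : ℝ) (x : Fin n → ℝ) (t L : ℝ) : Set ((Fin n → ℝ) × ℝ) :=
  (parQ n x L) ×ˢ Set.Ioo (t + γ * L ^ p) (t + L ^ p)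

/-- The full parabolic rectangle `R(x,t,L)`. -/
def pRect (n : ℕ) (p : ℝ) (x : Fin n → ℝ) (t L : ℝ) : Set ((Fin n → ℝ) × ℝ) :=
  (parQ n x L) ×ˢ Set.Ioo (t - L ^ p) (t + L ^ p)

/-- A weight: a nonnegative locally integrable function on `ℝ^{n+1}`. -/
def IsWeight (n : ℕ) (w : (Fin n → ℝ) × ℝ → ℝ) : Prop :=
  (∀ z, 0 ≤ w z) ∧ MeasureTheory.LocallyIntegrable w volume

/-- The superlevel measure condition implies the qualitative measure condition. -/
theorem stmt_9 (n : ℕ) (p : ℝ) (hp : 1 < p)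
    (w : (Fin n → ℝ) × ℝ → ℝ) (hw : IsWeight n w)
    (α β : ℝ) (hα0 : 0 < α) (hα1 : α < 1) (hβ0 : 0 < β)
    (hβ1 : β < 1 / (2 : ℝ) ^ ((n : ℝ) + p))
    (H : ∀ (x : Fin n → ℝ) (t L : ℝ), 0 < L →
      (∫ z in pMinus n p 0 x t L ∩ {z | (⨍ y in pPlus n p 0 x t L, w y) < α * w z}, w z) <
        β * ∫ z in pPlus n p 0 x t L, w z) :
    ∃ α' : ℝ, 0 < α' ∧ α' < 1 ∧ ∃ β' : ℝ, 0 < β' ∧ β' < 1 / (2 : ℝ) ^ ((n : ℝ) + p) ∧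
      ∀ (x : Fin n → ℝ) (t L : ℝ), 0 < L →
        ∀ E ⊆ pMinus n p 0 x t L, MeasurableSet E →
          (volume E).toReal < α' * (volume (pMinus n p 0 x t L)).toReal →
          (∫ z in E, w z) < β' * ∫ z in pPlus n p 0 x t L, w z := by
  classical
  obtain ⟨g₀, hg₀m, hwg₀⟩ := hw.2.aestronglyMeasurable
  set g : (Fin n → ℝ) × ℝ → ℝ := fun z => max (g₀ z) 0 with hg_def
  have hgm : StronglyMeasurable g := hg₀m.sup stronglyMeasurable_const
  have hwg : w =ᵐ[volume] g := by
    filter_upwards [hwg₀] with z hz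
    simp [hg_def, ← hz, hw.1 z]
  set c : ℝ := 1 / (2 : ℝ) ^ ((n : ℝ) + p) with hc_def
  have hc : 0 < c := by positivity
  set δ : ℝ := (c - β) / 2 with hδ_def
  have hδ : 0 < δ := by rw [hδ_def]; linarith
  refine ⟨min (α * δ) (1 / 2), by positivity,
    lt_of_le_of_lt (min_le_right _ _) (by norm_num), β + δ, by linarith,
    by rw [hδ_def]; linarith, ?_⟩
  intro x t L hL E hE hEm hEvol
  have hLp : 0 < L ^ p := Real.rpow_pos_of_pos hL p
  -- the cube as a product of intervals
  have hQ : parQ n x L = Set.univ.pi fun i => Icc (x i - L / 2) (x i + L / 2) := by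
    ext y
    simp only [parQ, mem_setOf_eq, mem_pi, mem_univ, true_implies, mem_Icc]
    refine ⟨fun h i => ?_, fun h i => ?_⟩
    · have := abs_le.1 (h i); exact ⟨by linarith [this.1], by linarith [this.2]⟩
    · exact abs_le.2 ⟨by linarith [(h i).1], by linarith [(h i).2]⟩
  have hQvol : volume (parQ n x L) = ENNReal.ofReal L ^ n := by
    rw [hQ, volume_pi_pi]
    have h1 : ∀ i : Fin n, volume (Icc (x i - L / 2) (x i + L / 2)) = ENNReal.ofReal L := by
      intro i; rw [Real.volume_Icc]; congr 1; ring
    simp [h1]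
  have hQ0 : volume (parQ n x L) ≠ 0 := by
    rw [hQvol]; exact pow_ne_zero _ (by simp only [ne_eq, ENNReal.ofReal_eq_zero, not_le]; linarith)
  have hQtop : volume (parQ n x L) ≠ ⊤ := by
    rw [hQvol]; exact ENNReal.pow_ne_top ENNReal.ofReal_ne_top
  have hMvol : volume (pMinus n p 0 x t L) = volume (parQ n x L) * ENNReal.ofReal (L ^ p) := by
    rw [pMinus, Measure.volume_eq_prod, Measure.prod_prod, Real.volume_Ioo]
    congr 2; ring
  have hPvol : volume (pPlus n p 0 x t L) = volume (parQ n x L) * ENNReal.ofReal (L ^ p) := by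
    rw [pPlus, Measure.volume_eq_prod, Measure.prod_prod, Real.volume_Ioo]
    congr 2; ring
  have hP0 : volume (pPlus n p 0 x t L) ≠ 0 := by
    rw [hPvol]
    exact mul_ne_zero hQ0 (by simp only [ne_eq, ENNReal.ofReal_eq_zero, not_le]; linarith)
  have hPtop : volume (pPlus n p 0 x t L) ≠ ⊤ :=
    by rw [hPvol]; exact ENNReal.mul_ne_top hQtop ENNReal.ofReal_ne_top
  have hMtop : volume (pMinus n p 0 x t L) ≠ ⊤ :=
    by rw [hMvol]; exact ENNReal.mul_ne_top hQtop ENNReal.ofReal_ne_top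
  have hMPvol : volume (pMinus n p 0 x t L) = volume (pPlus n p 0 x t L) := by
    rw [hMvol, hPvol]
  -- integrability on the parts
  have hK : IsCompact ((Set.univ.pi fun i => Icc (x i - L / 2) (x i + L / 2)) ×ˢ
      Icc (t - L ^ p) (t + L ^ p)) :=
    (isCompact_univ_pi fun i => isCompact_Icc).prod isCompact_Icc
  have hwK : IntegrableOn w ((Set.univ.pi fun i => Icc (x i - L / 2) (x i + L / 2)) ×ˢ
      Icc (t - L ^ p) (t + L ^ p)) volume := hw.2.integrableOn_isCompact hK
  have hMsub : pMinus n p 0 x t L ⊆ (Set.univ.pi fun i => Icc (x i - L / 2) (x i + L / 2)) ×ˢ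
      Icc (t - L ^ p) (t + L ^ p) := by
    rw [pMinus, hQ]
    refine Set.prod_mono subset_rfl fun s hs => ?_
    have h0 : (0 : ℝ) * L ^ p = 0 := zero_mul _
    exact ⟨le_of_lt hs.1, by linarith [hs.2]⟩
  have hPsub : pPlus n p 0 x t L ⊆ (Set.univ.pi fun i => Icc (x i - L / 2) (x i + L / 2)) ×ˢ
      Icc (t - L ^ p) (t + L ^ p) := by
    rw [pPlus, hQ]
    refine Set.prod_mono subset_rfl fun s hs => ?_
    have h0 : (0 : ℝ) * L ^ p = 0 := zero_mul _
    exact ⟨by linarith [hs.1], le_of_lt hs.2⟩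
  have hwM : IntegrableOn w (pMinus n p 0 x t L) volume := hwK.mono_set hMsub
  have hwP : IntegrableOn w (pPlus n p 0 x t L) volume := hwK.mono_set hPsub
  have hgM : IntegrableOn g (pMinus n p 0 x t L) volume :=
    hwM.congr_fun_ae (ae_restrict_of_ae hwg)
  -- measurability of the parts
  have hQms : MeasurableSet (parQ n x L) := by
    rw [hQ]; exact MeasurableSet.univ_pi fun i => measurableSet_Icc
  have hPms : MeasurableSet (pPlus n p 0 x t L) := hQms.prod measurableSet_Ioo
  -- the average and the integral over the upper part
  set I : ℝ := ∫ z in pPlus n p 0 x t L, w z with hI_def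
  have hI0 : 0 ≤ I := setIntegral_nonneg hPms fun z _ => hw.1 z
  set A : ℝ := ⨍ y in pPlus n p 0 x t L, w y with hA_def
  set V : ℝ := (volume (pPlus n p 0 x t L)).toReal with hV_def
  have hV : 0 < V := ENNReal.toReal_pos hP0 hPtop
  have hA_eq : A = V⁻¹ * I := by
    rw [hA_def, setAverage_eq, smul_eq_mul, hV_def, hI_def]; rfl
  have hA0 : 0 ≤ A := by rw [hA_eq]; positivity
  -- superlevel set (for the measurable representative)
  set S : Set ((Fin n → ℝ) × ℝ) := {z | A < α * g z} with hS_def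
  have hSm : MeasurableSet S :=
    measurableSet_lt measurable_const (hgm.measurable.const_mul α)
  have hEint : IntegrableOn w E volume := hwM.mono_set hE
  have hEtop : volume E ≠ ⊤ := ne_top_of_le_ne_top hMtop (measure_mono hE)
  -- split
  have hdisj : Disjoint (E ∩ S) (E \ S) :=
    Set.disjoint_left.2 fun z hz1 hz2 => hz2.2 hz1.2
  have hsplit : (∫ z in E, w z) = (∫ z in E ∩ S, w z) + ∫ z in E \ S, w z := by
    rw [← setIntegral_union hdisj (hEm.diff hSm) (hEint.mono_set inter_subset_left)
      (hEint.mono_set diff_subset), Set.inter_union_diff]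
  -- first term: use H
  have hT1 : (∫ z in E ∩ S, w z) < β * I := by
    have hsub : E ∩ S ⊆ pMinus n p 0 x t L ∩ S := inter_subset_inter_left _ hE
    have hmono : (∫ z in E ∩ S, w z) ≤ ∫ z in pMinus n p 0 x t L ∩ S, w z :=
      setIntegral_mono_set (hwM.mono_set inter_subset_left)
        (Filter.Eventually.of_forall fun z => hw.1 z)
        (HasSubset.Subset.eventuallyLE hsub)
    have hset : (pMinus n p 0 x t L ∩ S : Set _) =ᵐ[volume]
        (pMinus n p 0 x t L ∩ {z | A < α * w z} : Set _) := by
      rw [Filter.eventuallyEq_set]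
      filter_upwards [hwg] with z hz
      simp only [mem_inter_iff, hS_def, mem_setOf_eq, hz]
    have hcongr : (∫ z in pMinus n p 0 x t L ∩ S, w z) =
        ∫ z in pMinus n p 0 x t L ∩ {z | A < α * w z}, w z :=
      setIntegral_congr_set hset
    calc (∫ z in E ∩ S, w z) ≤ ∫ z in pMinus n p 0 x t L ∩ S, w z := hmono
      _ = ∫ z in pMinus n p 0 x t L ∩ {z | A < α * w z}, w z := hcongr
      _ < β * I := H x t L hL
  -- second term
  have hT2 : (∫ z in E \ S, w z) ≤ δ * I := by
    have h2g : (∫ z in E \ S, w z) = ∫ z in E \ S, g z :=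
      integral_congr_ae (ae_restrict_of_ae hwg)
    have hbound : ∀ z ∈ E \ S, g z ≤ A / α := by
      intro z hz
      have hns : ¬(A < α * g z) := hz.2
      rw [le_div_iff₀ hα0, mul_comm]
      exact not_lt.1 hns
    have hmeas : MeasurableSet (E \ S) := hEm.diff hSm
    have hint2 : IntegrableOn g (E \ S) volume :=
      (hgM.mono_set hE).mono_set diff_subset
    have hcst : IntegrableOn (fun _ => A / α) (E \ S) volume := by
      refine integrableOn_const (ne_of_lt ?_)
      exact lt_of_le_of_lt (measure_mono diff_subset) (lt_of_le_of_ne le_top hEtop)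
    have hstep : (∫ z in E \ S, g z) ≤ ∫ _z in E \ S, (A / α) :=
      setIntegral_mono_on hint2 hcst hmeas hbound
    have hconst : (∫ _z in E \ S, (A / α)) = (volume (E \ S)).toReal * (A / α) := by
      rw [setIntegral_const, smul_eq_mul]; rfl
    have hEd : (volume (E \ S)).toReal ≤ (volume E).toReal :=
      ENNReal.toReal_mono hEtop (measure_mono diff_subset)
    have hEv : (volume E).toReal ≤ (α * δ) * V := by
      have h1 : (volume E).toReal < min (α * δ) (1 / 2) * (volume (pMinus n p 0 x t L)).toReal :=
        hEvol
      have h2 : (volume (pMinus n p 0 x t L)).toReal = V := by rw [hV_def, hMPvol]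
      have h3 : min (α * δ) (1 / 2) ≤ α * δ := min_le_left _ _
      rw [h2] at h1
      nlinarith [mul_le_mul_of_nonneg_right h3 hV.le]
    have hAa : 0 ≤ A / α := div_nonneg hA0 hα0.le
    have hfinal : (volume E).toReal * (A / α) ≤ δ * I := by
      have h4 : (volume E).toReal * (A / α) ≤ ((α * δ) * V) * (A / α) := by
        exact mul_le_mul_of_nonneg_right hEv hAa
      have h5 : ((α * δ) * V) * (A / α) = δ * I := by
        rw [hA_eq]; field_simp
      linarith
    calc (∫ z in E \ S, w z) = ∫ z in E \ S, g z := h2g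
      _ ≤ ∫ _z in E \ S, (A / α) := hstep
      _ = (volume (E \ S)).toReal * (A / α) := hconst
      _ ≤ (volume E).toReal * (A / α) := mul_le_mul_of_nonneg_right hEd hAa
      _ ≤ δ * I := hfinal
  rw [hsplit]
  linarith
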